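/- If f : H_n → H_n is an additive commuting map, then for each 2 ≤ i ≤ n−1 and every X ∈ H_n, the (i,n)-entry of f(X) equals Σ_{j=2}^{n−1} [ f_{1,j}(e_{1,i})·X_{j,n} − X_{1,j}·f_{j,n}(e_{1,i}) ], where f_{a,b}(Y) denotes the (a,b)-entry of f(Y). -/

import Mathlib

open Matrix

/-- `X` belongs to the Heisenberg algebra `H_n`: its only possibly nonzero entries lie
in the first row strictly above the diagonal or the last column strictly above the diagonal
(0-based indices: row 0 with column ≠ 0, or column `n-1` with row ≠ `n-1`). -/
def IsHeis {n : ℕ} {F : Type*} [Field F] (X : Matrix (Fin n) (Fin n) F) : Prop :=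
  ∀ i j : Fin n, ¬ ((i.val = 0 ∧ j.val ≠ 0) ∨ (j.val = n - 1 ∧ i.val ≠ n - 1)) → X i j = 0

/-- Anti-transpose: `(antiT X) i j = X (rev j) (rev i)`. -/
def antiT {n : ℕ} {F : Type*} [Field F] (X : Matrix (Fin n) (Fin n) F) :
    Matrix (Fin n) (Fin n) F :=
  Matrix.of fun i j => X j.rev i.rev

/-- `A ∈ C_n`: first and last rows and columns of `A` are zero. -/
def IsC {n : ℕ} {F : Type*} [Field F] (A : Matrix (Fin n) (Fin n) F) : Prop :=
  ∀ i j : Fin n, (i.val = 0 ∨ i.val = n - 1 ∨ j.val = 0 ∨ j.val = n - 1) → A i j = 0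

/-- `A ∈ P_n`: hollow skew-persymmetric matrices in `C_n`. -/
def IsP {n : ℕ} {F : Type*} [Field F] (A : Matrix (Fin n) (Fin n) F) : Prop :=
  IsC A ∧ (∀ i j : Fin n, antiT A i j = - A i j) ∧ (∀ i : Fin n, A i i.rev = 0)

theorem stmt11 {n : ℕ} (hn : 3 ≤ n) {F : Type*} [Field F] [CharZero F]
    (f : Matrix (Fin n) (Fin n) F → Matrix (Fin n) (Fin n) F)
    (hmaps : ∀ X, IsHeis X → IsHeis (f X))
    (hadd : ∀ X Y, IsHeis X → IsHeis Y → f (X + Y) = f X + f Y)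
    (hcomm : ∀ X, IsHeis X → f X * X = X * f X) :
    ∀ i : Fin n, 1 ≤ i.val → i.val ≤ n - 2 → ∀ X, IsHeis X →
      f X i ⟨n - 1, by omega⟩ =
        ∑ j : Fin n, if 1 ≤ j.val ∧ j.val ≤ n - 2 then
          f (Matrix.single ⟨0, by omega⟩ i (1 : F)) ⟨0, by omega⟩ j * X j ⟨n - 1, by omega⟩
          - X ⟨0, by omega⟩ j * f (Matrix.single ⟨0, by omega⟩ i (1 : F)) j ⟨n - 1, by omega⟩
        else 0 := by
  intro i hi1 hi2 X hX
  have hz : (0 : ℕ) < n := by omega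
  set z : Fin n := ⟨0, hz⟩ with hzdef
  set m : Fin n := ⟨n - 1, by omega⟩ with hmdef
  set E : Matrix (Fin n) (Fin n) F := Matrix.single z i 1 with hEdef
  have hzv : z.val = 0 := rfl
  have hmv : m.val = n - 1 := rfl
  have hEheis : IsHeis E := by
    intro a b hab
    simp only [hEdef, Matrix.single, Matrix.of_apply]
    rw [if_neg]
    rintro ⟨rfl, rfl⟩
    exact hab (Or.inl ⟨rfl, by omega⟩)
  have hsum : IsHeis (X + E) := fun a b hab => by
    simp [Matrix.add_apply, hX a b hab, hEheis a b hab]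
  have hkey : f X * E + f E * X = X * f E + E * f X := by
    have h := hcomm (X + E) hsum
    rw [hadd X E hX hEheis] at h
    have h3 : (f X + f E) * (X + E) - f X * X - f E * E = f X * E + f E * X := by
      noncomm_ring
    have h4 : (X + E) * (f X + f E) - X * f X - E * f E = X * f E + E * f X := by
      noncomm_ring
    rw [← h3, ← h4, h, hcomm X hX, hcomm E hEheis]
  have hE1 : ∀ k : Fin n, E k m = 0 := by
    intro k
    simp only [hEdef, Matrix.single, Matrix.of_apply]
    rw [if_neg]
    rintro ⟨-, h2⟩
    have : i.val = n - 1 := by rw [h2]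
    omega
  have hE2 : ∀ k : Fin n, E z k = if k = i then (1:F) else 0 := by
    intro k
    simp only [hEdef, Matrix.single, Matrix.of_apply]
    by_cases hk : k = i
    · subst hk; simp
    · rw [if_neg, if_neg hk]; rintro ⟨-, h2⟩; exact hk h2.symm
  have hent := congrFun (congrFun hkey z) m
  simp only [Matrix.add_apply, Matrix.mul_apply, hE1, hE2, mul_zero, ite_mul, one_mul,
    zero_mul, Finset.sum_const_zero, zero_add, Finset.sum_ite_eq', Finset.mem_univ,
    if_true] at hent
  -- hent : ∑ k, f E z k * X k m = ∑ k, X z k * f E k m + f X i m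
  have hfE := hmaps E hEheis
  have hmain : f X i m = ∑ k : Fin n, (f E z k * X k m - X z k * f E k m) := by
    rw [Finset.sum_sub_distrib]
    linear_combination -hent
  rw [hmain]
  apply Finset.sum_congr rfl
  intro k _
  by_cases hk : 1 ≤ k.val ∧ k.val ≤ n - 2
  · rw [if_pos hk]
  · rw [if_neg hk]
    have hk0 : k.val = 0 ∨ k.val = n - 1 := by have := k.isLt; omega
    rcases hk0 with h0 | h1
    · have e1 : f E z k = 0 := hfE z k (by rintro (⟨-, h⟩ | ⟨h, -⟩) <;> omega)
      have e2 : X z k = 0 := hX z k (by rintro (⟨-, h⟩ | ⟨h, -⟩) <;> omega)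
      rw [e1, e2]; ring
    · have e1 : X k m = 0 := hX k m (by rintro (⟨h, -⟩ | ⟨-, h⟩) <;> omega)
      have e2 : f E k m = 0 := hfE k m (by rintro (⟨h, -⟩ | ⟨-, h⟩) <;> omega)
      rw [e1, e2]; ring
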